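/- For every subset I ⊆ [m], the intersection D_I ∩ Perm^{m−1} equals the convex hull of the set of barycenters { b(U_1 | ⋯ | U_p) : (U_1 | ⋯ | U_p) an ordered partition of [m] such that I ⊆ U_j for some j }. -/

import Mathlib

/-- The vertex of the permutohedron corresponding to a permutation `σ` of `[m]`:
the point `(σ(1), …, σ(m))` (in 0-based coordinates, `i ↦ σ(i) + 1`). -/
def permVertex (m : ℕ) (σ : Equiv.Perm (Fin m)) : Fin m → ℝ :=
  fun i => ((σ i : ℕ) : ℝ) + 1

/-- The permutohedron `Perm^{m-1} ⊂ ℝ^m`: the convex hull of the points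
`(σ(1), …, σ(m))` over all permutations `σ` of `[m]`. -/
def permutohedron (m : ℕ) : Set (Fin m → ℝ) :=
  convexHull ℝ {x | ∃ σ : Equiv.Perm (Fin m), x = permVertex m σ}

/-- An ordered partition `(U_1 | ⋯ | U_p)` of `[m]`: a tuple (list) of pairwise
disjoint nonempty subsets of `[m]` whose union is `[m]`. -/
def IsOrderedPartition (m : ℕ) (L : List (Finset (Fin m))) : Prop :=
  (∀ U ∈ L, U.Nonempty) ∧ L.Pairwise Disjoint ∧ L.foldr (· ∪ ·) ∅ = Finset.univ

/-- `|U_1| + ⋯ + |U_j|`, the sum of the cardinalities of the first `j` parts. -/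
def partialCard (m : ℕ) (L : List (Finset (Fin m))) (j : ℕ) : ℕ :=
  ((L.take j).map Finset.card).sum

/-- A permutation `σ` is compatible with the ordered partition `(U_1 | ⋯ | U_p)` if
for every `j` it maps `U_j` bijectively onto
`{|U_1| + ⋯ + |U_{j-1}| + 1, …, |U_1| + ⋯ + |U_j|}` (here in 0-based form). -/
def Compatible (m : ℕ) (L : List (Finset (Fin m))) (σ : Equiv.Perm (Fin m)) : Prop :=
  ∀ j : Fin L.length, ∀ i : Fin m,
    i ∈ L.get j ↔ partialCard m L j ≤ (σ i : ℕ) ∧ (σ i : ℕ) < partialCard m L (j + 1)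

/-- The face `F(U_1 | ⋯ | U_p)` of the permutohedron: the convex hull of the vertices
corresponding to permutations compatible with the ordered partition. -/
def permFace (m : ℕ) (L : List (Finset (Fin m))) : Set (Fin m → ℝ) :=
  convexHull ℝ {x | ∃ σ : Equiv.Perm (Fin m), Compatible m L σ ∧ x = permVertex m σ}

/-- The diagonal subspace `D_I = {x : x_i = x_j for all i, j ∈ I}`. -/
def diagSubspace (m : ℕ) (I : Finset (Fin m)) : Set (Fin m → ℝ) :=
  {x | ∀ i ∈ I, ∀ j ∈ I, x i = x j}

/-- The set of permutations compatible with an ordered partition. -/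
noncomputable def compatPerms (m : ℕ) (L : List (Finset (Fin m))) :
    Finset (Equiv.Perm (Fin m)) := by
  classical exact Finset.univ.filter (Compatible m L)

/-- The barycenter `b(U_1 | ⋯ | U_p)` of the face `F(U_1 | ⋯ | U_p)`: the average of
the vertices `(σ(1), …, σ(m))` over all compatible permutations `σ`. -/
noncomputable def barycenter (m : ℕ) (L : List (Finset (Fin m))) : Fin m → ℝ :=
  ((compatPerms m L).card : ℝ)⁻¹ • ∑ σ ∈ compatPerms m L, permVertex m σ


open Finset in
theorem mem_foldr_union {m : ℕ} (L : List (Finset (Fin m))) (x : Fin m) :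
    x ∈ L.foldr (· ∪ ·) ∅ ↔ ∃ U ∈ L, x ∈ U := by
  induction L with
  | nil => simp
  | cons U T ih => simp [ih]

theorem pc_succ {m : ℕ} (L : List (Finset (Fin m))) {j : ℕ} (hj : j < L.length) :
    partialCard m L (j + 1) = partialCard m L j + (L.get ⟨j, hj⟩).card := by
  unfold partialCard
  rw [List.take_succ, List.getElem?_eq_getElem hj]
  rw [List.map_append, List.sum_append]
  simp

theorem pc_stable {m : ℕ} (L : List (Finset (Fin m))) {j : ℕ} (hj : L.length ≤ j) :
    partialCard m L j = partialCard m L L.length := by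
  unfold partialCard
  rw [List.take_of_length_le hj, List.take_of_length_le (le_refl _)]

theorem pc_mono {m : ℕ} (L : List (Finset (Fin m))) : Monotone (partialCard m L) := by
  apply monotone_nat_of_le_succ
  intro j
  show partialCard m L j ≤ partialCard m L (j + 1)
  rcases lt_or_ge j L.length with h | h
  · rw [pc_succ L h]; omega
  · have h1 := pc_stable L h
    have h2 := pc_stable L (show L.length ≤ j + 1 by omega)
    omega

theorem card_foldr {m : ℕ} (L : List (Finset (Fin m))) (hd : L.Pairwise Disjoint) :
    (L.foldr (· ∪ ·) ∅).card = (L.map Finset.card).sum := by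
  induction L with
  | nil => simp
  | cons U T ih =>
    rcases List.pairwise_cons.1 hd with ⟨h1, h2⟩
    have hdisj : Disjoint U (T.foldr (· ∪ ·) ∅) := by
      rw [Finset.disjoint_iff_ne]
      intro a ha b hb hab
      rw [mem_foldr_union] at hb
      rcases hb with ⟨V, hV, hbV⟩
      exact Finset.disjoint_iff_ne.1 (h1 V hV) a ha b hbV hab
    simp only [List.foldr_cons, List.map_cons, List.sum_cons]
    rw [Finset.card_union_of_disjoint hdisj, ih h2]

theorem pc_length {m : ℕ} (L : List (Finset (Fin m))) (hL : IsOrderedPartition m L) :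
    partialCard m L L.length = m := by
  unfold partialCard
  rw [List.take_of_length_le (le_refl _), ← card_foldr L hL.2.1, hL.2.2]
  simp

theorem pc_le {m : ℕ} (L : List (Finset (Fin m))) (hL : IsOrderedPartition m L) (j : ℕ) :
    partialCard m L j ≤ m := by
  have hl := pc_length L hL
  rcases le_or_gt j L.length with h | h
  · have := pc_mono L h; omega
  · have := pc_stable L h.le; omega

theorem pc_lt {m : ℕ} (L : List (Finset (Fin m))) (hL : IsOrderedPartition m L)
    {j : ℕ} (hj : j < L.length) : partialCard m L j < partialCard m L (j + 1) := by
  rw [pc_succ L hj]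
  have h1 : L.get ⟨j, hj⟩ ∈ L := List.get_mem L ⟨j, hj⟩
  have h2 := Finset.card_pos.2 (hL.1 _ h1)
  omega

theorem block_unique {m : ℕ} (L : List (Finset (Fin m))) (hL : IsOrderedPartition m L)
    {i : Fin m} {j j' : Fin L.length} (h : i ∈ L.get j) (h' : i ∈ L.get j') : j = j' := by
  by_contra hne
  have hp := List.pairwise_iff_get.1 hL.2.1
  rcases lt_or_gt_of_ne hne with hlt | hlt
  · exact Finset.disjoint_left.1 (hp j j' hlt) h h'
  · exact Finset.disjoint_left.1 (hp j' j hlt) h' h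

theorem exists_block {m : ℕ} (L : List (Finset (Fin m))) (hL : IsOrderedPartition m L)
    (i : Fin m) : ∃ j : Fin L.length, i ∈ L.get j := by
  have : i ∈ L.foldr (· ∪ ·) ∅ := by rw [hL.2.2]; exact Finset.mem_univ i
  rw [mem_foldr_union] at this
  rcases this with ⟨U, hU, hiU⟩
  rcases List.mem_iff_getElem.1 hU with ⟨j, hj, rfl⟩
  exact ⟨⟨j, hj⟩, by simpa using hiU⟩

theorem interval_disj {m : ℕ} (L : List (Finset (Fin m))) {j j' : Fin L.length}
    (hne : j ≠ j') {v : ℕ} (h : partialCard m L j ≤ v ∧ v < partialCard m L (j + 1))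
    (h' : partialCard m L j' ≤ v ∧ v < partialCard m L (j' + 1)) : False := by
  rcases lt_or_gt_of_ne (Fin.val_ne_of_ne hne) with hlt | hlt
  · have := pc_mono L (show (j : ℕ) + 1 ≤ (j' : ℕ) by omega); omega
  · have := pc_mono L (show (j' : ℕ) + 1 ≤ (j : ℕ) by omega); omega

theorem compat_exists {m : ℕ} (L : List (Finset (Fin m))) (hL : IsOrderedPartition m L) :
    ∃ σ : Equiv.Perm (Fin m), Compatible m L σ := by
  classical
  choose blk hblk using exists_block L hL
  set p : Fin m → ℕ := fun i =>
    partialCard m L (blk i) + ((L.get (blk i)).filter (fun i' => i' < i)).card with hp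
  have hfilt : ∀ i : Fin m, ((L.get (blk i)).filter (fun i' => i' < i)).card
      < (L.get (blk i)).card := by
    intro i
    apply Finset.card_lt_card
    constructor
    · exact Finset.filter_subset _ _
    · intro hsub
      have := hsub (hblk i)
      simp at this
  have hub : ∀ i : Fin m, partialCard m L (blk i) ≤ p i ∧ p i < partialCard m L (blk i + 1) := by
    intro i
    constructor
    · simp [hp]
    · rw [pc_succ L (blk i).isLt]
      have := hfilt i
      simp only [hp, Fin.eta]
      omega
  have hpm : ∀ i : Fin m, p i < m := by
    intro i
    have h1 := (hub i).2
    have h2 : partialCard m L ((blk i : ℕ) + 1) ≤ m := pc_le L hL _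
    omega
  have hinj : Function.Injective (fun i : Fin m => (⟨p i, hpm i⟩ : Fin m)) := by
    intro i i' hii
    simp only [Fin.mk_eq_mk] at hii
    have hbb : blk i = blk i' := by
      by_contra hne
      exact interval_disj L hne (hub i) (hii ▸ hub i')
    have hcc : ((L.get (blk i)).filter (fun a => a < i)).card
        = ((L.get (blk i)).filter (fun a => a < i')).card := by
      have := hub i
      rw [hp] at hii
      simp only at hii
      rw [← hbb] at hii
      omega
    by_contra hne
    have key : ∀ a b : Fin m, a < b → a ∈ L.get (blk i) → b ∈ L.get (blk i) →
        ((L.get (blk i)).filter (fun x => x < a)).card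
          < ((L.get (blk i)).filter (fun x => x < b)).card := by
      intro a b hab ha hb
      apply Finset.card_lt_card
      constructor
      · intro x hx
        simp only [Finset.mem_filter] at hx ⊢
        exact ⟨hx.1, lt_trans hx.2 hab⟩
      · intro hsub
        have := hsub (by simp [Finset.mem_filter]; exact ⟨ha, hab⟩)
        simp at this
    rcases lt_or_gt_of_ne hne with hlt | hlt
    · have := key i i' hlt (hblk i) (hbb ▸ hblk i'); omega
    · have := key i' i hlt (hbb ▸ hblk i') (hblk i); omega
  have hbij := (Finite.injective_iff_bijective).1 hinj
  refine ⟨Equiv.ofBijective _ hbij, ?_⟩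
  intro j i
  have hσ : ((Equiv.ofBijective _ hbij) i : ℕ) = p i := rfl
  rw [hσ]
  constructor
  · intro hi
    have : j = blk i := block_unique L hL hi (hblk i)
    rw [this]
    exact hub i
  · intro hbd
    have : j = blk i := by
      by_contra hne
      exact interval_disj L hne hbd (hub i)
    rw [this]
    exact hblk i

theorem compatPerms_nonempty {m : ℕ} (L : List (Finset (Fin m))) (hL : IsOrderedPartition m L) :
    (compatPerms m L).Nonempty := by
  classical
  rcases compat_exists L hL with ⟨σ, hσ⟩
  exact ⟨σ, by simp [compatPerms, hσ]⟩

theorem compat_swap {m : ℕ} (L : List (Finset (Fin m))) {σ : Equiv.Perm (Fin m)}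
    (hσ : Compatible m L σ) {j : Fin L.length} {a b : Fin m}
    (ha : partialCard m L j ≤ (a : ℕ) ∧ (a : ℕ) < partialCard m L (j + 1))
    (hb : partialCard m L j ≤ (b : ℕ) ∧ (b : ℕ) < partialCard m L (j + 1)) :
    Compatible m L (Equiv.swap a b * σ) := by
  intro j' i'
  have hval : ((Equiv.swap a b * σ) i') = Equiv.swap a b (σ i') := rfl
  rw [hval, hσ j' i']
  have key : ∀ v w : Fin m,
      (partialCard m L j ≤ (v : ℕ) ∧ (v : ℕ) < partialCard m L (j + 1)) →
      (partialCard m L j ≤ (w : ℕ) ∧ (w : ℕ) < partialCard m L (j + 1)) →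
      ((partialCard m L j' ≤ (v : ℕ) ∧ (v : ℕ) < partialCard m L (j' + 1)) ↔
       (partialCard m L j' ≤ (w : ℕ) ∧ (w : ℕ) < partialCard m L (j' + 1))) := by
    intro v w hv hw
    by_cases hjj : j' = j
    · subst hjj; simp [hv, hw]
    · constructor
      · intro hv'; exact (interval_disj L hjj hv' hv).elim
      · intro hw'; exact (interval_disj L hjj hw' hw).elim
  rcases eq_or_ne (σ i') a with h1 | h1
  · rw [h1, Equiv.swap_apply_left]; exact key a b ha hb
  · rcases eq_or_ne (σ i') b with h2 | h2
    · rw [h2, Equiv.swap_apply_right]; exact key b a hb ha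
    · rw [Equiv.swap_apply_of_ne_of_ne h1 h2]

theorem fiber_card_eq {m : ℕ} (L : List (Finset (Fin m))) (i : Fin m)
    {j : Fin L.length} {a b : Fin m}
    (ha : partialCard m L j ≤ (a : ℕ) ∧ (a : ℕ) < partialCard m L (j + 1))
    (hb : partialCard m L j ≤ (b : ℕ) ∧ (b : ℕ) < partialCard m L (j + 1)) :
    ((compatPerms m L).filter (fun σ => σ i = a)).card
      = ((compatPerms m L).filter (fun σ => σ i = b)).card := by
  classical
  apply Finset.card_bij' (fun σ _ => Equiv.swap a b * σ) (fun σ _ => Equiv.swap a b * σ)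
  · intro σ hσ
    simp only [Finset.mem_filter, compatPerms, Finset.mem_univ, true_and] at hσ ⊢
    refine ⟨compat_swap L hσ.1 ha hb, ?_⟩
    have : (Equiv.swap a b * σ) i = Equiv.swap a b (σ i) := rfl
    rw [this, hσ.2, Equiv.swap_apply_left]
  · intro σ hσ
    simp only [Finset.mem_filter, compatPerms, Finset.mem_univ, true_and] at hσ ⊢
    refine ⟨compat_swap L hσ.1 ha hb, ?_⟩
    have : (Equiv.swap a b * σ) i = Equiv.swap a b (σ i) := rfl
    rw [this, hσ.2, Equiv.swap_apply_right]
  · intro σ _; rw [← mul_assoc, Equiv.swap_mul_self, one_mul]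
  · intro σ _; rw [← mul_assoc, Equiv.swap_mul_self, one_mul]

theorem bary_coord {m : ℕ} (L : List (Finset (Fin m))) (hL : IsOrderedPartition m L)
    (j : Fin L.length) (i : Fin m) (hi : i ∈ L.get j) :
    barycenter m L i
      = (partialCard m L j : ℝ) + (((L.get j).card : ℝ) + 1) / 2 := by
  classical
  set C := compatPerms m L with hC
  set pcj := partialCard m L j with hpcj
  set c := (L.get j).card with hc
  have hpcs : partialCard m L ((j : ℕ) + 1) = pcj + c := by
    rw [pc_succ L j.isLt]
  have hcpos : 0 < c := Finset.card_pos.2 (hL.1 _ (List.get_mem L j))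
  have hpcm : pcj + c ≤ m := hpcs ▸ pc_le L hL _
  set blockF : Finset (Fin m) :=
    Finset.univ.filter (fun v => pcj ≤ (v : ℕ) ∧ (v : ℕ) < pcj + c) with hBF
  have hmem : ∀ v : Fin m, v ∈ blockF ↔ pcj ≤ (v : ℕ) ∧ (v : ℕ) < pcj + c := by
    intro v; simp [hBF]
  have hmaps : ∀ σ ∈ C, σ i ∈ blockF := by
    intro σ hσ
    simp only [hC, compatPerms, Finset.mem_filter, Finset.mem_univ, true_and] at hσ
    rw [hmem, ← hpcs]
    exact (hσ j i).1 hi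
  -- all fibers have equal cardinality
  have hifib : i ∈ L.get j := hi
  obtain ⟨σ₀, hσ₀⟩ := compatPerms_nonempty L hL
  set n := ((C.filter (fun σ => σ i = σ₀ i)).card) with hn
  have hfib : ∀ v ∈ blockF, (C.filter (fun σ => σ i = v)).card = n := by
    intro v hv
    rw [hmem] at hv
    have hv0 : σ₀ i ∈ blockF := hmaps σ₀ hσ₀
    rw [hmem] at hv0
    exact fiber_card_eq L i (hpcs ▸ hv) (hpcs ▸ hv0)
  -- block has cardinality c
  have hbc : blockF.card = c := by
    have : blockF.card = (Finset.Ico pcj (pcj + c)).card := by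
      refine Finset.card_bij (fun v _ => (v : ℕ)) ?_ ?_ ?_
      · intro v hv; rw [hmem] at hv; simp [Finset.mem_Ico, hv]
      · intro v _ w _ h; exact Fin.val_injective h
      · intro u hu
        rw [Finset.mem_Ico] at hu
        exact ⟨⟨u, lt_of_lt_of_le hu.2 hpcm⟩, by rw [hmem]; exact hu, rfl⟩
    rw [this, Nat.card_Ico]; omega
  -- N = n * c
  have hN : C.card = n * c := by
    rw [Finset.card_eq_sum_card_fiberwise hmaps, Finset.sum_congr rfl hfib]
    simp [hbc, mul_comm]
  have hNpos : 0 < C.card := Finset.card_pos.2 ⟨σ₀, hσ₀⟩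
  have hnpos : 0 < n := by
    rcases Nat.eq_zero_or_pos n with h | h
    · rw [h, zero_mul] at hN; omega
    · exact h
  -- the sum over C of (σ i + 1)
  have hsum : ∑ σ ∈ C, permVertex m σ i
      = (n : ℝ) * ∑ v ∈ blockF, (((v : ℕ) : ℝ) + 1) := by
    rw [← Finset.sum_fiberwise_of_maps_to hmaps (fun σ => permVertex m σ i)]
    rw [Finset.mul_sum]
    apply Finset.sum_congr rfl
    intro v hv
    have : ∀ σ ∈ C.filter (fun σ => σ i = v), permVertex m σ i = ((v : ℕ) : ℝ) + 1 := by
      intro σ hσ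
      rw [Finset.mem_filter] at hσ
      simp [permVertex, hσ.2]
    rw [Finset.sum_congr rfl this, Finset.sum_const, hfib v hv, nsmul_eq_mul]
  -- the sum over the block
  have hblock : ∑ v ∈ blockF, (((v : ℕ) : ℝ) + 1)
      = (c : ℝ) * ((pcj : ℝ) + 1) + (c : ℝ) * ((c : ℝ) - 1) / 2 := by
    have h1 : ∑ v ∈ blockF, (((v : ℕ) : ℝ) + 1)
        = ∑ u ∈ Finset.Ico pcj (pcj + c), ((u : ℝ) + 1) := by
      refine Finset.sum_bij (fun v _ => (v : ℕ)) ?_ ?_ ?_ ?_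
      · intro v hv; rw [hmem] at hv; simp [Finset.mem_Ico, hv]
      · intro v _ w _ h; exact Fin.val_injective h
      · intro u hu
        rw [Finset.mem_Ico] at hu
        exact ⟨⟨u, lt_of_lt_of_le hu.2 hpcm⟩, by rw [hmem]; exact hu, rfl⟩
      · intro v _; rfl
    rw [h1, Finset.sum_Ico_eq_sum_range]
    have h2 : pcj + c - pcj = c := by omega
    rw [h2]
    have h3 : ∀ k ∈ Finset.range c, ((pcj + k : ℕ) : ℝ) + 1
        = ((pcj : ℝ) + 1) + (k : ℝ) := by
      intro k _; push_cast; ring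
    rw [Finset.sum_congr rfl h3, Finset.sum_add_distrib, Finset.sum_const,
      Finset.card_range, nsmul_eq_mul]
    have h4 : ∑ k ∈ Finset.range c, (k : ℝ) = (c : ℝ) * ((c : ℝ) - 1) / 2 := by
      induction c with
      | zero => simp
      | succ d ih =>
        rw [Finset.sum_range_succ, ih]
        push_cast; ring
    rw [h4]
  -- put it together
  have hbar : barycenter m L i = ((C.card : ℝ))⁻¹ * ∑ σ ∈ C, permVertex m σ i := by
    simp only [barycenter, ← hC, Pi.smul_apply, Finset.sum_apply, smul_eq_mul]
  rw [hbar, hsum, hblock, hN]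
  have hnR : (n : ℝ) ≠ 0 := by positivity
  have hcR : (c : ℝ) ≠ 0 := by positivity
  push_cast
  field_simp
  ring

theorem convex_diag {m : ℕ} (I : Finset (Fin m)) : Convex ℝ (diagSubspace m I) := by
  intro x hx y hy a b _ _ _
  intro i hi i' hi'
  simp only [Pi.add_apply, Pi.smul_apply, smul_eq_mul]
  rw [hx i hi i' hi', hy i hi i' hi']

theorem bary_mem_perm {m : ℕ} (L : List (Finset (Fin m))) (hL : IsOrderedPartition m L) :
    barycenter m L ∈ permutohedron m := by
  classical
  have hne := compatPerms_nonempty L hL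
  have hNpos : (0 : ℝ) < (compatPerms m L).card := by
    exact_mod_cast Finset.card_pos.2 hne
  rw [barycenter, Finset.smul_sum]
  apply Convex.sum_mem (convex_convexHull ℝ _)
  · intro σ _; positivity
  · rw [Finset.sum_const, nsmul_eq_mul, mul_inv_cancel₀ (ne_of_gt hNpos)]
  · intro σ _
    exact subset_convexHull ℝ _ ⟨σ, rfl⟩

theorem bary_mem_diag {m : ℕ} (L : List (Finset (Fin m))) (hL : IsOrderedPartition m L)
    (I : Finset (Fin m)) (j : Fin L.length) (hIj : I ⊆ L.get j) :
    barycenter m L ∈ diagSubspace m I := by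
  intro i hi i' hi'
  rw [bary_coord L hL j i (hIj hi), bary_coord L hL j i' (hIj hi')]

/-- The singleton ordered partition induced by a permutation. -/
def singPart (m : ℕ) (σ : Equiv.Perm (Fin m)) : List (Finset (Fin m)) :=
  (List.finRange m).map (fun v => ({σ.symm v} : Finset (Fin m)))

theorem singPart_length {m : ℕ} (σ : Equiv.Perm (Fin m)) : (singPart m σ).length = m := by
  simp [singPart]

theorem singPart_isOP {m : ℕ} (σ : Equiv.Perm (Fin m)) :
    IsOrderedPartition m (singPart m σ) := by
  refine ⟨?_, ?_, ?_⟩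
  · intro U hU
    rcases List.mem_map.1 hU with ⟨v, _, rfl⟩
    exact ⟨σ.symm v, Finset.mem_singleton_self _⟩
  · rw [singPart, List.pairwise_map]
    apply List.Pairwise.imp ?_ (List.pairwise_lt_finRange m)
    intro a b hab
    rw [Finset.disjoint_singleton]
    exact fun h => absurd (σ.symm.injective h) (ne_of_lt hab)
  · apply Finset.eq_univ_of_forall
    intro x
    rw [mem_foldr_union]
    exact ⟨{x}, List.mem_map.2 ⟨σ x, List.mem_finRange _, by simp⟩, Finset.mem_singleton_self x⟩

theorem singPart_pc {m : ℕ} (σ : Equiv.Perm (Fin m)) (j : ℕ) :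
    partialCard m (singPart m σ) j = min j m := by
  unfold partialCard
  rw [List.map_take, singPart, List.map_map]
  have : (fun v : Fin m => ({σ.symm v} : Finset (Fin m))) = fun v => {σ.symm v} := rfl
  have h2 : (Finset.card ∘ fun v : Fin m => ({σ.symm v} : Finset (Fin m)))
      = Function.const (Fin m) 1 := by
    funext v; simp
  rw [h2, List.map_const, List.take_replicate, List.sum_replicate]
  simp

theorem singPart_get {m : ℕ} (σ : Equiv.Perm (Fin m)) (j : ℕ) (hj : j < (singPart m σ).length) :
    (singPart m σ).get ⟨j, hj⟩ = {σ.symm ⟨j, by simpa [singPart_length] using hj⟩} := by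
  simp [singPart, List.get_eq_getElem, List.get_finRange]

theorem vertex_eq_bary {m : ℕ} (σ : Equiv.Perm (Fin m)) :
    permVertex m σ = barycenter m (singPart m σ) := by
  funext i
  have hj : ((σ i : ℕ)) < (singPart m σ).length := by
    rw [singPart_length]; exact (σ i).isLt
  have hmem : i ∈ (singPart m σ).get ⟨(σ i : ℕ), hj⟩ := by
    rw [singPart_get]
    simp
  rw [bary_coord _ (singPart_isOP σ) _ i hmem, singPart_get]
  simp only [singPart_pc, Finset.card_singleton]
  rw [permVertex]
  have : min ((σ i : ℕ)) m = (σ i : ℕ) := min_eq_left (le_of_lt (σ i).isLt)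
  rw [this]
  norm_num

theorem easy_direction {m : ℕ} (I : Finset (Fin m)) :
    convexHull ℝ {b : Fin m → ℝ | ∃ L : List (Finset (Fin m)),
        IsOrderedPartition m L ∧ (∃ j : Fin L.length, I ⊆ L.get j) ∧
        b = barycenter m L} ⊆ diagSubspace m I ∩ permutohedron m := by
  apply convexHull_min
  · rintro b ⟨L, hL, ⟨j, hIj⟩, rfl⟩
    exact ⟨bary_mem_diag L hL I j hIj, bary_mem_perm L hL⟩
  · exact (convex_diag I).inter (convex_convexHull ℝ _)

theorem indexOf_map_inj {α β : Type*} [DecidableEq α] [DecidableEq β] (f : α → β)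
    (hf : Function.Injective f) (l : List α) (a : α) :
    (l.map f).idxOf (f a) = l.idxOf a := by
  induction l with
  | nil => simp
  | cons b t ih =>
    by_cases h : b = a
    · subst h; simp
    · have h1 : f b ≠ f a := fun hh => h (hf hh)
      rw [List.map_cons, List.idxOf_cons_ne _ h1, List.idxOf_cons_ne _ (Ne.symm (fun hh => h hh.symm)), ih]

theorem indexOf_sorted {m : ℕ} (l : List (Fin m)) (hs : l.Pairwise (· < ·)) (v : Fin m)
    (hv : v ∈ l) : l.idxOf v = l.countP (fun x => decide (x < v)) := by
  induction l with
  | nil => simp at hv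
  | cons a t ih =>
    rcases List.pairwise_cons.1 hs with ⟨ha, ht⟩
    by_cases h : v = a
    · subst h
      rw [List.idxOf_cons_self, List.countP_cons]
      have : t.countP (fun x => decide (x < v)) = 0 := by
        rw [List.countP_eq_zero]
        intro x hx
        simpa using not_lt_of_gt (ha x hx)
      simp [this]
    · have hvt : v ∈ t := by
        rcases List.mem_cons.1 hv with h' | h'
        · exact absurd h' h
        · exact h'
      have hav : a < v := ha v hvt
      rw [List.idxOf_cons_ne _ (fun hh => h hh.symm), List.countP_cons, ih ht hvt]
      simp [hav]

theorem countP_finRange {m : ℕ} (q : Fin m → Bool) :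
    (List.finRange m).countP q = (Finset.univ.filter (fun x => q x = true)).card := by
  rw [List.countP_eq_length_filter]
  rw [← List.toFinset_card_of_nodup (List.Nodup.filter _ (List.nodup_finRange m))]
  congr 1
  ext x
  simp [List.mem_filter]

/-- The list of elements outside `I`, sorted by `σ`-value. -/
def nsl {m : ℕ} (I : Finset (Fin m)) (σ : Equiv.Perm (Fin m)) : List (Fin m) :=
  ((List.finRange m).map σ.symm).filter (fun i => decide (i ∉ I))

/-- The rank of `i`: the number of elements outside `I` with smaller `σ`-value. -/
def rnk {m : ℕ} (I : Finset (Fin m)) (σ : Equiv.Perm (Fin m)) (i : Fin m) : ℕ :=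
  (Finset.univ.filter (fun i' => i' ∉ I ∧ σ i' < σ i)).card

theorem nsl_eq_map {m : ℕ} (I : Finset (Fin m)) (σ : Equiv.Perm (Fin m)) :
    nsl I σ = ((List.finRange m).filter (fun v => decide (σ.symm v ∉ I))).map σ.symm := by
  rw [nsl, List.filter_map]
  rfl

theorem nsl_nodup {m : ℕ} (I : Finset (Fin m)) (σ : Equiv.Perm (Fin m)) : (nsl I σ).Nodup := by
  rw [nsl_eq_map]
  exact ((List.Nodup.filter _ (List.nodup_finRange m)).map σ.symm.injective)

theorem nsl_mem {m : ℕ} (I : Finset (Fin m)) (σ : Equiv.Perm (Fin m)) (i : Fin m) :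
    i ∈ nsl I σ ↔ i ∉ I := by
  rw [nsl, List.mem_filter]
  constructor
  · intro h; simpa using h.2
  · intro h
    exact ⟨List.mem_map.2 ⟨σ i, List.mem_finRange _, by simp⟩, by simpa⟩

theorem nsl_length {m : ℕ} (I : Finset (Fin m)) (σ : Equiv.Perm (Fin m)) :
    (nsl I σ).length = m - I.card := by
  rw [← List.toFinset_card_of_nodup (nsl_nodup I σ)]
  have : (nsl I σ).toFinset = Iᶜ := by
    ext x
    simp [List.mem_toFinset, nsl_mem]
  rw [this, Finset.card_compl]
  simp

theorem nsl_indexOf {m : ℕ} (I : Finset (Fin m)) (σ : Equiv.Perm (Fin m)) (i : Fin m)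
    (hi : i ∉ I) : (nsl I σ).idxOf i = rnk I σ i := by
  classical
  have hstep : (nsl I σ).idxOf i
      = ((List.finRange m).filter (fun v => decide (σ.symm v ∉ I))).idxOf (σ i) := by
    rw [nsl_eq_map]
    conv_lhs => rw [show i = σ.symm (σ i) by simp]
    exact indexOf_map_inj _ σ.symm.injective _ _
  rw [hstep]
  have hsort : ((List.finRange m).filter (fun v => decide (σ.symm v ∉ I))).Pairwise (· < ·) :=
    List.Pairwise.filter _ (List.pairwise_lt_finRange m)
  have hmem : σ i ∈ (List.finRange m).filter (fun v => decide (σ.symm v ∉ I)) := by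
    rw [List.mem_filter]
    simp [hi]
  rw [indexOf_sorted _ hsort _ hmem, List.countP_filter, countP_finRange]
  rw [rnk]
  refine Finset.card_bij (fun v _ => σ.symm v) ?_ ?_ ?_
  · intro v hv
    simp only [Finset.mem_filter, Finset.mem_univ, true_and] at hv ⊢
    have h1 : v < σ i := by
      have := hv
      simp only [Bool.and_eq_true, decide_eq_true_eq] at this
      exact this.1
    have h2 : σ.symm v ∉ I := by
      have := hv
      simp only [Bool.and_eq_true, decide_eq_true_eq] at this
      exact this.2
    exact ⟨h2, by simpa using h1⟩
  · intro v _ w _ h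
    exact σ.symm.injective h
  · intro i' hi'
    simp only [Finset.mem_filter, Finset.mem_univ, true_and] at hi'
    refine ⟨σ i', ?_, by simp⟩
    simp only [Finset.mem_filter, Finset.mem_univ, true_and, Bool.and_eq_true,
      decide_eq_true_eq]
    exact ⟨hi'.2, by simp [hi'.1]⟩

/-- number of elements of `I` with smaller `σ`-value -/
def cntI {m : ℕ} (I : Finset (Fin m)) (σ : Equiv.Perm (Fin m)) (i : Fin m) : ℕ :=
  (I.filter (fun i' => σ i' < σ i)).card

theorem card_val_lt {m : ℕ} (σ : Equiv.Perm (Fin m)) (v : Fin m) :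
    (Finset.univ.filter (fun i' => σ i' < v)).card = (v : ℕ) := by
  have h1 : (Finset.univ.filter (fun i' => σ i' < v)).card = (Finset.Iio v).card := by
    refine Finset.card_bij (fun i _ => σ i) ?_ ?_ ?_
    · intro i hi
      simp only [Finset.mem_filter, Finset.mem_univ, true_and] at hi
      simpa using hi
    · intro a _ b _ h; exact σ.injective h
    · intro w hw
      refine ⟨σ.symm w, ?_, by simp⟩
      simp only [Finset.mem_filter, Finset.mem_univ, true_and, Equiv.apply_symm_apply]
      simpa using hw
  rw [h1, Fin.card_Iio]

theorem val_eq_rnk_add_cnt {m : ℕ} (I : Finset (Fin m)) (σ : Equiv.Perm (Fin m)) (i : Fin m) :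
    (σ i : ℕ) = rnk I σ i + cntI I σ i := by
  classical
  have := Finset.card_filter_add_card_filter_not
    (s := Finset.univ.filter (fun i' => σ i' < σ i)) (p := fun i' => i' ∈ I)
  rw [card_val_lt σ (σ i)] at this
  have e1 : ((Finset.univ.filter (fun i' => σ i' < σ i)).filter (fun i' => i' ∈ I))
      = I.filter (fun i' => σ i' < σ i) := by
    ext x; simp only [Finset.mem_filter, Finset.mem_univ, true_and]; tauto
  have e2 : ((Finset.univ.filter (fun i' => σ i' < σ i)).filter (fun i' => i' ∉ I))
      = Finset.univ.filter (fun i' => i' ∉ I ∧ σ i' < σ i) := by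
    ext x; simp only [Finset.mem_filter, Finset.mem_univ, true_and]; tauto
  rw [e1, e2] at this
  rw [rnk, cntI]
  omega

theorem rnk_le_iff {m : ℕ} (I : Finset (Fin m)) (σ : Equiv.Perm (Fin m)) {i i' : Fin m}
    (hi : i ∉ I) (hi' : i' ∈ I) : rnk I σ i' ≤ rnk I σ i ↔ σ i' < σ i := by
  constructor
  · intro h
    by_contra hle
    push_neg at hle
    have hne : σ i < σ i' := by
      rcases lt_or_eq_of_le hle with h' | h'
      · exact h'
      · exact absurd (σ.injective h') (by rintro rfl; exact hi hi')
    have hsub : insert i (Finset.univ.filter (fun a => a ∉ I ∧ σ a < σ i))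
        ⊆ Finset.univ.filter (fun a => a ∉ I ∧ σ a < σ i') := by
      intro a ha
      rcases Finset.mem_insert.1 ha with rfl | ha
      · simp [hi, hne]
      · simp only [Finset.mem_filter, Finset.mem_univ, true_and] at ha ⊢
        exact ⟨ha.1, lt_trans ha.2 hne⟩
    have hcard := Finset.card_le_card hsub
    rw [Finset.card_insert_of_notMem (by simp)] at hcard
    rw [rnk, rnk] at h
    omega
  · intro h
    apply Finset.card_le_card
    intro a ha
    simp only [Finset.mem_filter, Finset.mem_univ, true_and] at ha ⊢
    exact ⟨ha.1, lt_trans ha.2 h⟩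

theorem rnk_le_of_memI {m : ℕ} (I : Finset (Fin m)) (σ : Equiv.Perm (Fin m)) (i : Fin m) :
    rnk I σ i ≤ m - I.card := by
  rw [rnk]
  have h1 : (Finset.univ.filter (fun i' => i' ∉ I ∧ σ i' < σ i))
      ⊆ Finset.univ.filter (fun i' => i' ∉ I) := by
    intro a ha
    simp only [Finset.mem_filter, Finset.mem_univ, true_and] at ha ⊢
    exact ha.1
  have h2 := Finset.card_le_card h1
  have h3 : (Finset.univ.filter (fun i' => i' ∉ I)) = Iᶜ := by
    ext x; simp
  rw [h3, Finset.card_compl] at h2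
  simpa using h2

theorem sum_cntI {m : ℕ} (I : Finset (Fin m)) (σ : Equiv.Perm (Fin m)) :
    ∑ i ∈ I, cntI I σ i = I.card * (I.card - 1) / 2 := by
  classical
  have key : ∀ i ∈ I, cntI I σ i + (I.filter (fun i' => σ i < σ i')).card = I.card - 1 := by
    intro i hi
    have hsplit : I.filter (fun i' => ¬ σ i' < σ i)
        = insert i (I.filter (fun i' => σ i < σ i')) := by
      ext x
      simp only [Finset.mem_filter, Finset.mem_insert, not_lt]
      constructor
      · rintro ⟨hx, hle⟩
        rcases lt_or_eq_of_le hle with h' | h'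
        · exact Or.inr ⟨hx, h'⟩
        · exact Or.inl (σ.injective h'.symm)
      · rintro (rfl | ⟨hx, hlt⟩)
        · exact ⟨hi, le_refl _⟩
        · exact ⟨hx, le_of_lt hlt⟩
    have hni : i ∉ I.filter (fun i' => σ i < σ i') := by simp
    have := Finset.card_filter_add_card_filter_not
      (s := I) (p := fun i' => σ i' < σ i)
    rw [hsplit, Finset.card_insert_of_notMem hni] at this
    rw [cntI]
    have hpos : 0 < I.card := Finset.card_pos.2 ⟨i, hi⟩
    omega
  have hsym : ∑ i ∈ I, cntI I σ i = ∑ i ∈ I, (I.filter (fun i' => σ i < σ i')).card := by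
    simp only [cntI, Finset.card_filter]
    rw [Finset.sum_comm]
  have htot : ∑ i ∈ I, cntI I σ i + ∑ i ∈ I, (I.filter (fun i' => σ i < σ i')).card
      = I.card * (I.card - 1) := by
    rw [← Finset.sum_add_distrib]
    rw [Finset.sum_congr rfl key, Finset.sum_const, smul_eq_mul]
  omega

theorem sum_take_explicit (t k b j : ℕ) :
    (List.take j (List.replicate t 1 ++ k :: List.replicate b 1)).sum
      = min j t + (if t < j then k + min (j - t - 1) b else 0) := by
  rw [List.take_append, List.take_replicate, List.sum_append,
    List.sum_replicate, List.length_replicate]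
  rcases le_or_gt j t with h | h
  · have h0 : j - t = 0 := by omega
    rw [h0]
    simp only [List.take_zero, List.sum_nil, smul_eq_mul, mul_one, add_zero]
    rw [if_neg (not_lt.2 h)]
    omega
  · obtain ⟨s, hs⟩ : ∃ s, j - t = s + 1 := ⟨j - t - 1, by omega⟩
    rw [hs, List.take_succ_cons, List.sum_cons, List.take_replicate, List.sum_replicate]
    simp only [smul_eq_mul, mul_one]
    rw [if_pos h]
    omega

section Lpart
variable {m : ℕ} (I : Finset (Fin m)) (σ : Equiv.Perm (Fin m))

/-- The ordered partition: first `t` non-`I` elements as singletons (in `σ`-order),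
then `I`, then the remaining non-`I` elements as singletons. -/
def Lpart (t : ℕ) : List (Finset (Fin m)) :=
  ((nsl I σ).take t).map (fun i => ({i} : Finset (Fin m))) ++ [I] ++
    ((nsl I σ).drop t).map (fun i => ({i} : Finset (Fin m)))

theorem Lpart_length {t : ℕ} (ht : t ≤ m - I.card) :
    (Lpart I σ t).length = (m - I.card) + 1 := by
  have := nsl_length I σ
  simp only [Lpart, List.length_append, List.length_map, List.length_take,
    List.length_drop, List.length_singleton]
  omega

theorem Lpart_card_map {t : ℕ} (ht : t ≤ m - I.card) :
    (Lpart I σ t).map Finset.card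
      = List.replicate t 1 ++ I.card :: List.replicate ((m - I.card) - t) 1 := by
  have hlen := nsl_length I σ
  simp only [Lpart, List.map_append, List.map_map, List.map_singleton]
  have hconst : (Finset.card ∘ fun i : Fin m => ({i} : Finset (Fin m)))
      = Function.const (Fin m) 1 := by funext i; simp
  rw [hconst, List.map_const, List.map_const, List.length_take, List.length_drop, hlen,
    Nat.min_eq_left ht]
  simp [List.append_assoc]

theorem Lpart_pc_le {t j : ℕ} (ht : t ≤ m - I.card) (hj : j ≤ t) :
    partialCard m (Lpart I σ t) j = j := by
  rw [partialCard, List.map_take, Lpart_card_map I σ ht, sum_take_explicit]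
  rw [if_neg (by omega)]
  omega

theorem Lpart_pc_gt {t j : ℕ} (ht : t ≤ m - I.card) (hj : t < j) (hj2 : j ≤ m - I.card + 1) :
    partialCard m (Lpart I σ t) j = (j - 1) + I.card := by
  rw [partialCard, List.map_take, Lpart_card_map I σ ht, sum_take_explicit]
  rw [if_pos hj]
  omega

theorem Lpart_isOP {t : ℕ} (hI : I.Nonempty) (ht : t ≤ m - I.card) :
    IsOrderedPartition m (Lpart I σ t) := by
  classical
  have hnodup := nsl_nodup I σ
  have htd : List.Disjoint ((nsl I σ).take t) ((nsl I σ).drop t) := by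
    have h1 : ((nsl I σ).take t ++ (nsl I σ).drop t).Nodup := by
      rw [List.take_append_drop]; exact hnodup
    exact fun a ha hb => (List.nodup_append.1 h1).2.2 a ha a hb rfl
  have hmemtake : ∀ i ∈ (nsl I σ).take t, i ∉ I := by
    intro i hi
    exact (nsl_mem I σ i).1 (List.mem_of_mem_take hi)
  have hmemdrop : ∀ i ∈ (nsl I σ).drop t, i ∉ I := by
    intro i hi
    exact (nsl_mem I σ i).1 (List.mem_of_mem_drop hi)
  refine ⟨?_, ?_, ?_⟩
  · intro U hU
    simp only [Lpart, List.append_assoc, List.mem_append, List.mem_map, List.mem_singleton] at hU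
    rcases hU with (⟨i, _, rfl⟩ | hU | ⟨i, _, rfl⟩)
    · exact ⟨i, Finset.mem_singleton_self i⟩
    · rw [hU]; exact hI
    · exact ⟨i, Finset.mem_singleton_self i⟩
  · rw [Lpart, List.append_assoc]
    rw [List.pairwise_append]
    refine ⟨?_, ?_, ?_⟩
    · rw [List.pairwise_map]
      apply List.Pairwise.imp ?_ ((hnodup.sublist (List.take_sublist t _)))
      intro a b hab
      rw [Finset.disjoint_singleton]
      tauto
    · rw [List.singleton_append, List.pairwise_cons]
      constructor
      · intro U hU
        rcases List.mem_map.1 hU with ⟨i, hi, rfl⟩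
        rw [Finset.disjoint_singleton_right]
        exact hmemdrop i hi
      · rw [List.pairwise_map]
        apply List.Pairwise.imp ?_ ((hnodup.sublist (List.drop_sublist t _)))
        intro a b hab
        rw [Finset.disjoint_singleton]
        tauto
    · intro U hU V hV
      rw [List.singleton_append] at hV
      rcases List.mem_map.1 hU with ⟨i, hi, rfl⟩
      rcases List.mem_cons.1 hV with rfl | hV
      · rw [Finset.disjoint_singleton_left]
        exact hmemtake i hi
      · rcases List.mem_map.1 hV with ⟨i', hi', rfl⟩
        rw [Finset.disjoint_singleton]
        exact fun h => (htd hi (h ▸ hi'))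
  · apply Finset.eq_univ_of_forall
    intro x
    rw [mem_foldr_union]
    by_cases hx : x ∈ I
    · exact ⟨I, by simp [Lpart], hx⟩
    · have hxn : x ∈ nsl I σ := (nsl_mem I σ x).2 hx
      rw [← List.take_append_drop t (nsl I σ), List.mem_append] at hxn
      rcases hxn with h | h
      · exact ⟨{x}, by
          simp only [Lpart, List.append_assoc, List.mem_append, List.mem_map]
          exact Or.inl ⟨x, h, rfl⟩, Finset.mem_singleton_self x⟩
      · exact ⟨{x}, by
          simp only [Lpart, List.append_assoc, List.mem_append, List.mem_map,
            List.mem_cons]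
          exact Or.inr (Or.inr ⟨x, h, rfl⟩), Finset.mem_singleton_self x⟩

theorem Lpart_get_I {t : ℕ} (ht : t ≤ m - I.card) :
    (Lpart I σ t).get ⟨t, by rw [Lpart_length I σ ht]; omega⟩ = I := by
  have hlen := nsl_length I σ
  simp only [Lpart, List.append_assoc, List.get_eq_getElem]
  rw [List.getElem_append_right (by simp only [List.length_map, List.length_take, hlen]; omega)]
  simp only [List.length_map, List.length_take, hlen, List.singleton_append]
  simp only [show t - min t (m - I.card) = 0 from by omega]
  rw [List.getElem_cons_zero]

theorem Lpart_get_lt {t r : ℕ} (ht : t ≤ m - I.card) (hr : r < t) :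
    (Lpart I σ t).get ⟨r, by rw [Lpart_length I σ ht]; omega⟩
      = {(nsl I σ).get ⟨r, by rw [nsl_length]; omega⟩} := by
  have hlen := nsl_length I σ
  simp only [Lpart, List.append_assoc, List.get_eq_getElem]
  rw [List.getElem_append_left (by simp only [List.length_map, List.length_take, hlen]; omega)]
  rw [List.getElem_map]
  congr 1
  rw [List.getElem_take]

theorem Lpart_get_ge {t r : ℕ} (ht : t ≤ m - I.card) (hr : t ≤ r) (hr2 : r < m - I.card) :
    (Lpart I σ t).get ⟨r + 1, by rw [Lpart_length I σ ht]; omega⟩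
      = {(nsl I σ).get ⟨r, by rw [nsl_length]; omega⟩} := by
  have hlen := nsl_length I σ
  simp only [Lpart, List.append_assoc, List.get_eq_getElem]
  rw [List.getElem_append_right (by simp only [List.length_map, List.length_take, hlen]; omega)]
  simp only [List.length_map, List.length_take, hlen, List.singleton_append]
  simp only [show r + 1 - min t (m - I.card) = (r - t) + 1 from by omega]
  rw [List.getElem_cons_succ, List.getElem_map, List.getElem_drop]
  simp only [show t + (r - t) = r from by omega]

end Lpart

section Crux
variable {m : ℕ} (I : Finset (Fin m)) (σ : Equiv.Perm (Fin m))

theorem Lpart_bary_I (hI : I.Nonempty) {t : ℕ} (ht : t ≤ m - I.card) {i : Fin m}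
    (hi : i ∈ I) :
    barycenter m (Lpart I σ t) i = (t : ℝ) + ((I.card : ℝ) + 1) / 2 := by
  have hOP := Lpart_isOP I σ hI ht
  have hlen := Lpart_length I σ ht
  have hget := Lpart_get_I I σ ht
  have hmem : i ∈ (Lpart I σ t).get ⟨t, by rw [hlen]; omega⟩ := by rw [hget]; exact hi
  rw [bary_coord _ hOP _ i hmem, hget, Lpart_pc_le I σ ht (le_refl t)]

theorem Lpart_bary_nI (hI : I.Nonempty) {t : ℕ} (ht : t ≤ m - I.card) {i : Fin m}
    (hi : i ∉ I) :
    barycenter m (Lpart I σ t) i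
      = (rnk I σ i : ℝ) + 1 + (if t ≤ rnk I σ i then (I.card : ℝ) else 0) := by
  have hOP := Lpart_isOP I σ hI ht
  have hlen := Lpart_length I σ ht
  have hr : (nsl I σ).idxOf i = rnk I σ i := nsl_indexOf I σ i hi
  have hrlen : rnk I σ i < m - I.card := by
    rw [← hr, ← nsl_length I σ]
    exact List.idxOf_lt_length_iff.2 ((nsl_mem I σ i).2 hi)
  have hget_i : (nsl I σ).get ⟨rnk I σ i, by rw [nsl_length]; omega⟩ = i := by
    simp only [← hr]
    exact List.idxOf_get _
  rcases lt_or_ge (rnk I σ i) t with hcase | hcase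
  · have hmem : i ∈ (Lpart I σ t).get ⟨rnk I σ i, by rw [hlen]; omega⟩ := by
      rw [Lpart_get_lt I σ ht hcase, hget_i]
      exact Finset.mem_singleton_self i
    rw [bary_coord _ hOP _ i hmem]
    simp only [Fin.val_mk]
    rw [Lpart_get_lt I σ ht hcase, Lpart_pc_le I σ ht (le_of_lt hcase),
      if_neg (by omega), Finset.card_singleton]
    norm_num
  · have hmem : i ∈ (Lpart I σ t).get ⟨rnk I σ i + 1, by rw [hlen]; omega⟩ := by
      rw [Lpart_get_ge I σ ht hcase hrlen, hget_i]
      exact Finset.mem_singleton_self i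
    rw [bary_coord _ hOP _ i hmem]
    simp only [Fin.val_mk]
    rw [Lpart_get_ge I σ ht hcase hrlen,
      Lpart_pc_gt I σ ht (by omega) (by omega), if_pos hcase, Finset.card_singleton]
    have : rnk I σ i + 1 - 1 = rnk I σ i := by omega
    rw [this]
    push_cast
    ring

theorem crux (hI : I.Nonempty) :
    (fun i => if i ∈ I then (∑ i' ∈ I, permVertex m σ i') / (I.card : ℝ)
        else permVertex m σ i)
      ∈ convexHull ℝ {b : Fin m → ℝ | ∃ L : List (Finset (Fin m)),
          IsOrderedPartition m L ∧ (∃ j : Fin L.length, I ⊆ L.get j) ∧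
          b = barycenter m L} := by
  classical
  set k := I.card with hk
  set n := m - k with hn
  have hkpos : 0 < k := Finset.card_pos.2 hI
  have hkR : (k : ℝ) ≠ 0 := by positivity
  set w : ℕ → ℝ := fun t => ((I.filter (fun i' => rnk I σ i' = t)).card : ℝ) / k with hw
  have hmaps : ∀ i' ∈ I, rnk I σ i' ∈ Finset.range (n + 1) := by
    intro i' _
    rw [Finset.mem_range]
    have := rnk_le_of_memI I σ i'
    omega
  have hfibsum : ∑ t ∈ Finset.range (n + 1), (I.filter (fun i' => rnk I σ i' = t)).card
      = k := by
    rw [← Finset.card_eq_sum_card_fiberwise hmaps]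
  have hsumw : ∑ t ∈ Finset.range (n + 1), w t = 1 := by
    rw [hw]
    rw [← Finset.sum_div]
    rw [← Nat.cast_sum, hfibsum, div_self hkR]
  have hwnn : ∀ t ∈ Finset.range (n + 1), 0 ≤ w t := by
    intro t _; rw [hw]; positivity
  -- the point is the convex combination of the barycenters
  have hpoint : (fun i => if i ∈ I then (∑ i' ∈ I, permVertex m σ i') / (k : ℝ)
        else permVertex m σ i)
      = ∑ t ∈ Finset.range (n + 1), w t • barycenter m (Lpart I σ t) := by
    funext i
    rw [Finset.sum_apply]
    simp only [Pi.smul_apply, smul_eq_mul]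
    by_cases hi : i ∈ I
    · rw [if_pos hi]
      have hbar : ∀ t ∈ Finset.range (n + 1),
          w t * barycenter m (Lpart I σ t) i
            = w t * (t : ℝ) + w t * (((k : ℝ) + 1) / 2) := by
        intro t htm
        rw [Finset.mem_range] at htm
        rw [Lpart_bary_I I σ hI (by omega) hi]
        ring
      rw [Finset.sum_congr rfl hbar, Finset.sum_add_distrib, ← Finset.sum_mul, hsumw,
        one_mul]
      -- ∑ t, w t * t = (∑_{i'∈I} rnk i') / k
      have hS : ∑ t ∈ Finset.range (n + 1), w t * (t : ℝ)
          = (∑ i' ∈ I, (rnk I σ i' : ℝ)) / k := by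
        rw [← Finset.sum_fiberwise_of_maps_to hmaps (fun i' => (rnk I σ i' : ℝ))]
        rw [Finset.sum_div]
        apply Finset.sum_congr rfl
        intro t _
        rw [hw]
        have : ∀ i' ∈ I.filter (fun i' => rnk I σ i' = t), (rnk I σ i' : ℝ) = (t : ℝ) := by
          intro i' hi'
          rw [Finset.mem_filter] at hi'
          rw [hi'.2]
        rw [Finset.sum_congr rfl this, Finset.sum_const, nsmul_eq_mul]
        ring
      rw [hS]
      -- now use val_eq_rnk_add_cnt and sum_cntI
      have hval : ∑ i' ∈ I, ((σ i' : ℕ) : ℝ)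
          = ∑ i' ∈ I, (rnk I σ i' : ℝ) + ((k * (k - 1) / 2 : ℕ) : ℝ) := by
        rw [← Nat.cast_sum, ← Nat.cast_sum]
        rw [← Nat.cast_add]
        congr 1
        rw [← sum_cntI I σ, ← Finset.sum_add_distrib]
        apply Finset.sum_congr rfl
        intro i' _
        exact val_eq_rnk_add_cnt I σ i'
      have hcast : ((k * (k - 1) / 2 : ℕ) : ℝ) = (k : ℝ) * ((k : ℝ) - 1) / 2 := by
        have hdvd : 2 ∣ k * (k - 1) := by
          rcases Nat.even_or_odd k with h | h
          · exact Dvd.dvd.mul_right h.two_dvd _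
          · exact Dvd.dvd.mul_left (Nat.Odd.sub_odd h odd_one).two_dvd _
        rw [Nat.cast_div hdvd (by norm_num)]
        rw [Nat.cast_mul, Nat.cast_sub hkpos]
        norm_num
      have hsv : ∑ i' ∈ I, permVertex m σ i' = ∑ i' ∈ I, (((σ i' : ℕ) : ℝ) + 1) := by
        apply Finset.sum_congr rfl
        intro i' _
        rw [permVertex]
      rw [hsv, Finset.sum_add_distrib, Finset.sum_const, nsmul_eq_mul, mul_one, hval,
        hcast]
      have hkc : (I.card : ℝ) = (k : ℝ) := by rw [hk]
      field_simp
      ring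
    · rw [if_neg hi]
      have hr : (nsl I σ).idxOf i = rnk I σ i := nsl_indexOf I σ i hi
      have hrlen : rnk I σ i < n := by
        rw [← hr, hn, ← nsl_length I σ]
        exact List.idxOf_lt_length_iff.2 ((nsl_mem I σ i).2 hi)
      set r := rnk I σ i with hrdef
      have hbar : ∀ t ∈ Finset.range (n + 1),
          w t * barycenter m (Lpart I σ t) i
            = w t * ((r : ℝ) + 1) + (if t ≤ r then w t * (k : ℝ) else 0) := by
        intro t htm
        rw [Finset.mem_range] at htm
        rw [Lpart_bary_nI I σ hI (by omega) hi]
        rw [← hrdef]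
        split_ifs with h
        · ring
        · ring
      rw [Finset.sum_congr rfl hbar, Finset.sum_add_distrib, ← Finset.sum_mul, hsumw,
        one_mul]
      have hsplit : ∑ t ∈ Finset.range (n + 1), (if t ≤ r then w t * (k : ℝ) else 0)
          = ∑ t ∈ Finset.range (r + 1), w t * (k : ℝ) := by
        rw [← Finset.sum_filter]
        congr 1
        ext t
        simp only [Finset.mem_filter, Finset.mem_range]
        omega
      rw [hsplit]
      have hterm : ∀ t ∈ Finset.range (r + 1), w t * (k : ℝ)
          = ((I.filter (fun i' => rnk I σ i' = t)).card : ℝ) := by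
        intro t _
        rw [hw]
        field_simp
      rw [Finset.sum_congr rfl hterm]
      have hcnt : ∑ t ∈ Finset.range (r + 1),
          ((I.filter (fun i' => rnk I σ i' = t)).card : ℝ) = (cntI I σ i : ℝ) := by
        have hmaps2 : ∀ i' ∈ I.filter (fun i' => rnk I σ i' ≤ r),
            rnk I σ i' ∈ Finset.range (r + 1) := by
          intro i' hi'
          rw [Finset.mem_filter] at hi'
          rw [Finset.mem_range]
          omega
        have h1 := Finset.card_eq_sum_card_fiberwise hmaps2
        have h2 : ∀ t ∈ Finset.range (r + 1),
            ((I.filter (fun i' => rnk I σ i' ≤ r)).filter (fun i' => rnk I σ i' = t))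
              = I.filter (fun i' => rnk I σ i' = t) := by
          intro t htm
          rw [Finset.mem_range] at htm
          ext x
          simp only [Finset.mem_filter]
          constructor
          · rintro ⟨⟨hx, _⟩, hx2⟩; exact ⟨hx, hx2⟩
          · rintro ⟨hx, hx2⟩; exact ⟨⟨hx, by omega⟩, hx2⟩
        have h2' : ∀ t ∈ Finset.range (r + 1),
            ((I.filter (fun i' => rnk I σ i' ≤ r)).filter (fun i' => rnk I σ i' = t)).card
              = (I.filter (fun i' => rnk I σ i' = t)).card := by
          intro t htm
          rw [h2 t htm]
        rw [Finset.sum_congr rfl h2'] at h1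
        have h3 : I.filter (fun i' => rnk I σ i' ≤ r)
            = I.filter (fun i' => σ i' < σ i) := by
          ext x
          simp only [Finset.mem_filter]
          constructor
          · rintro ⟨hx, hx2⟩
            exact ⟨hx, (rnk_le_iff I σ hi hx).1 hx2⟩
          · rintro ⟨hx, hx2⟩
            exact ⟨hx, (rnk_le_iff I σ hi hx).2 hx2⟩
        have hnat : ∑ t ∈ Finset.range (r + 1),
            (I.filter (fun i' => rnk I σ i' = t)).card = cntI I σ i := by
          rw [← h1, h3]
          rfl
        rw [← hnat, Nat.cast_sum]
      rw [hcnt]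
      have hvr := val_eq_rnk_add_cnt I σ i
      have hfin : ((σ i : ℕ) : ℝ) = (r : ℝ) + (cntI I σ i : ℝ) := by
        have h9 : (σ i : ℕ) = r + cntI I σ i := hvr
        exact_mod_cast h9
      rw [permVertex, hfin]
      ring
  rw [hpoint]
  apply Convex.sum_mem (convex_convexHull ℝ _) hwnn hsumw
  intro t htm
  rw [Finset.mem_range] at htm
  apply subset_convexHull
  refine ⟨Lpart I σ t, Lpart_isOP I σ hI (by omega), ?_, rfl⟩
  refine ⟨⟨t, by rw [Lpart_length I σ (by omega)]; omega⟩, ?_⟩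
  rw [Lpart_get_I I σ (by omega)]

end Crux

section Main

noncomputable def piMap {m : ℕ} (I : Finset (Fin m)) : (Fin m → ℝ) →ₗ[ℝ] (Fin m → ℝ) where
  toFun x := fun i => if i ∈ I then (∑ i' ∈ I, x i') / (I.card : ℝ) else x i
  map_add' x y := by
    classical
    funext i
    by_cases hi : i ∈ I
    · simp only [Pi.add_apply, if_pos hi]
      rw [Finset.sum_add_distrib]
      ring
    · simp [hi]
  map_smul' c x := by
    classical
    funext i
    by_cases hi : i ∈ I
    · simp only [Pi.smul_apply, smul_eq_mul, if_pos hi, RingHom.id_apply, ← Finset.mul_sum]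
      ring
    · simp [hi]

theorem piMap_apply {m : ℕ} (I : Finset (Fin m)) (x : Fin m → ℝ) :
    piMap I x = fun i => if i ∈ I then (∑ i' ∈ I, x i') / (I.card : ℝ) else x i := rfl

theorem piMap_fixed {m : ℕ} (I : Finset (Fin m)) (hI : I.Nonempty) {x : Fin m → ℝ}
    (hx : x ∈ diagSubspace m I) : piMap I x = x := by
  classical
  funext i
  by_cases hi : i ∈ I
  · have hc : ∀ i' ∈ I, x i' = x i := fun i' hi' => hx i' hi' i hi
    have hcpos : 0 < I.card := Finset.card_pos.2 hI
    have hcR : (I.card : ℝ) ≠ 0 := by positivity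
    rw [piMap_apply]
    simp only [if_pos hi]
    rw [Finset.sum_congr rfl hc, Finset.sum_const, nsmul_eq_mul]
    field_simp
  · rw [piMap_apply]
    simp [hi]


theorem stmt9 (m : ℕ) (hm : 1 ≤ m) (I : Finset (Fin m)) :
    diagSubspace m I ∩ permutohedron m =
      convexHull ℝ {b : Fin m → ℝ | ∃ L : List (Finset (Fin m)),
        IsOrderedPartition m L ∧ (∃ j : Fin L.length, I ⊆ L.get j) ∧
        b = barycenter m L} := by

  classical
  apply Set.eq_of_subset_of_subset ?_ (easy_direction I)
  rintro x ⟨hxD, hxP⟩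
  rcases Finset.eq_empty_or_nonempty I with hI | hI
  · -- I = ∅ : every vertex is a barycenter of its singleton partition
    subst hI
    have hVS : {x : Fin m → ℝ | ∃ σ : Equiv.Perm (Fin m), x = permVertex m σ}
        ⊆ {b : Fin m → ℝ | ∃ L : List (Finset (Fin m)),
          IsOrderedPartition m L ∧ (∃ j : Fin L.length, (∅ : Finset (Fin m)) ⊆ L.get j) ∧
          b = barycenter m L} := by
      rintro v ⟨σ, rfl⟩
      refine ⟨singPart m σ, singPart_isOP σ, ?_, vertex_eq_bary σ⟩
      refine ⟨⟨0, by rw [singPart_length]; omega⟩, Finset.empty_subset _⟩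
    exact convexHull_mono hVS hxP
  · rw [permutohedron, convexHull_eq] at hxP
    obtain ⟨ι, tt, ww, zz, hw0, hw1, hz, hcm⟩ := hxP
    have hx_eq : x = ∑ i ∈ tt, ww i • zz i := by
      rw [← hcm, Finset.centerMass_eq_of_sum_1 _ _ hw1]
    have hπ : piMap I x = ∑ i ∈ tt, ww i • (piMap I (zz i)) := by
      rw [hx_eq, map_sum]
      apply Finset.sum_congr rfl
      intro i _
      rw [LinearMap.map_smul]
    have hfix := piMap_fixed I hI hxD
    rw [← hfix, hπ]
    apply Convex.sum_mem (convex_convexHull ℝ _) hw0 hw1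
    intro i hi
    obtain ⟨σ, hσ⟩ := hz i hi
    rw [hσ, piMap_apply]
    exact crux I σ hI


end Main
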